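/- The unique solution in positive integers of the Diophantine equation 2x^3 - y^3 = 1 is (x, y) = (1, 1); that is, if x and y are positive integers with 2x^3 - y^3 = 1, then x = 1 and y = 1. -/

import Mathlib

/-! Eisenstein integers ℤ[ω], ω² + ω + 1 = 0, as a Euclidean domain. -/

structure Eis : Type where
  a : ℤ
  b : ℤ
  deriving DecidableEq

namespace Eis

@[ext] theorem ext' {x y : Eis} (h1 : x.a = y.a) (h2 : x.b = y.b) : x = y := by
  cases x; cases y; simp_all

instance : Zero Eis := ⟨⟨0, 0⟩⟩
instance : One Eis := ⟨⟨1, 0⟩⟩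
instance : Add Eis := ⟨fun x y => ⟨x.a + y.a, x.b + y.b⟩⟩
instance : Neg Eis := ⟨fun x => ⟨-x.a, -x.b⟩⟩
instance : Mul Eis := ⟨fun x y => ⟨x.a * y.a - x.b * y.b, x.a * y.b + x.b * y.a - x.b * y.b⟩⟩

@[simp] theorem zero_a : (0 : Eis).a = 0 := rfl
@[simp] theorem zero_b : (0 : Eis).b = 0 := rfl
@[simp] theorem one_a : (1 : Eis).a = 1 := rfl
@[simp] theorem one_b : (1 : Eis).b = 0 := rfl
@[simp] theorem add_a (x y : Eis) : (x + y).a = x.a + y.a := rfl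
@[simp] theorem add_b (x y : Eis) : (x + y).b = x.b + y.b := rfl
@[simp] theorem neg_a (x : Eis) : (-x).a = -x.a := rfl
@[simp] theorem neg_b (x : Eis) : (-x).b = -x.b := rfl
@[simp] theorem mul_a (x y : Eis) : (x * y).a = x.a * y.a - x.b * y.b := rfl
@[simp] theorem mul_b (x y : Eis) : (x * y).b = x.a * y.b + x.b * y.a - x.b * y.b := rfl

instance commRing : CommRing Eis where
  add_assoc := by intros; ext <;> simp <;> ring
  zero_add := by intros; ext <;> simp
  add_zero := by intros; ext <;> simp
  add_comm := by intros; ext <;> simp <;> ring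
  neg_add_cancel := by intros; ext <;> simp
  mul_assoc := by intros; ext <;> simp <;> ring
  one_mul := by intros; ext <;> simp
  mul_one := by intros; ext <;> simp
  left_distrib := by intros; ext <;> simp <;> ring
  right_distrib := by intros; ext <;> simp <;> ring
  zero_mul := by intros; ext <;> simp
  mul_zero := by intros; ext <;> simp
  mul_comm := by intros; ext <;> simp <;> ring
  nsmul := fun n x => ⟨n * x.a, n * x.b⟩
  nsmul_zero := by intros; ext <;> (show _ * _ = _; simp)
  nsmul_succ := by intros; ext <;> (show _ * _ = _ * _ + _; push_cast; ring)
  zsmul := fun n x => ⟨n * x.a, n * x.b⟩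
  zsmul_zero' := by intros; ext <;> (show _ * _ = _; simp)
  zsmul_succ' := by intros; ext <;> (show _ * _ = _ * _ + _; push_cast; ring)
  zsmul_neg' := by intros; ext <;> (show _ * _ = -(_ * _); simp [Int.negSucc_eq]; ring)

@[simp] theorem sub_a (x y : Eis) : (x - y).a = x.a - y.a := rfl
@[simp] theorem sub_b (x y : Eis) : (x - y).b = x.b - y.b := rfl

instance : Nontrivial Eis := ⟨⟨0, 1, by decide⟩⟩

/-- Norm. -/
def nrm (x : Eis) : ℤ := x.a ^ 2 - x.a * x.b + x.b ^ 2

theorem nrm_mul (x y : Eis) : nrm (x * y) = nrm x * nrm y := by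
  simp [nrm]; ring

theorem nrm_nonneg (x : Eis) : 0 ≤ nrm x := by
  have : 4 * nrm x = (2 * x.a - x.b) ^ 2 + 3 * x.b ^ 2 := by simp [nrm]; ring
  nlinarith [sq_nonneg (2 * x.a - x.b), sq_nonneg x.b]

@[simp] theorem nrm_eq_zero {x : Eis} : nrm x = 0 ↔ x = 0 := by
  constructor
  · intro h
    have h4 : (2 * x.a - x.b) ^ 2 + 3 * x.b ^ 2 = 0 := by simp [nrm] at h; nlinarith
    have hb : x.b = 0 := by nlinarith [sq_nonneg (2 * x.a - x.b), sq_nonneg x.b]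
    have ha : x.a = 0 := by nlinarith [sq_nonneg (2 * x.a - x.b)]
    ext <;> simp [ha, hb]
  · rintro rfl; simp [nrm]

instance : NoZeroDivisors Eis where
  eq_zero_or_eq_zero_of_mul_eq_zero {x y} h := by
    have hn : nrm x * nrm y = 0 := by rw [← nrm_mul, h]; simp [nrm]
    rcases mul_eq_zero.1 hn with h1 | h1
    · exact Or.inl (nrm_eq_zero.1 h1)
    · exact Or.inr (nrm_eq_zero.1 h1)

instance : IsDomain Eis := NoZeroDivisors.to_isDomain _

end Eis

namespace Eis

/-- Conjugate. -/
def conj (x : Eis) : Eis := ⟨x.a - x.b, -x.b⟩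

theorem mul_conj (y : Eis) : y * conj y = ⟨nrm y, 0⟩ := by
  ext <;> simp [conj, nrm] <;> ring

theorem nrm_conj (y : Eis) : nrm (conj y) = nrm y := by simp [conj, nrm]; ring

theorem nrm_pos {y : Eis} (hy : y ≠ 0) : 0 < nrm y :=
  lt_of_le_of_ne (nrm_nonneg y) (fun h => hy (nrm_eq_zero.1 h.symm))

instance : Div Eis :=
  ⟨fun x y => ⟨round (((x * conj y).a : ℚ) / (nrm y : ℚ)),
               round (((x * conj y).b : ℚ) / (nrm y : ℚ))⟩⟩

theorem div_def (x y : Eis) : x / y = ⟨round (((x * conj y).a : ℚ) / (nrm y : ℚ)),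
    round (((x * conj y).b : ℚ) / (nrm y : ℚ))⟩ := rfl

instance : Mod Eis := ⟨fun x y => x - y * (x / y)⟩

theorem mod_def (x y : Eis) : x % y = x - y * (x / y) := rfl

theorem round_bound (c n : ℤ) (hn : 0 < n) :
    |(c : ℚ) - (round ((c : ℚ) / (n : ℚ)) : ℚ) * n| ≤ (n : ℚ) / 2 := by
  have hn' : (0 : ℚ) < (n : ℚ) := by exact_mod_cast hn
  have h := abs_sub_round ((c : ℚ) / (n : ℚ))
  have : |(c : ℚ) - (round ((c : ℚ) / (n : ℚ)) : ℚ) * n|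
      = |((c : ℚ) / n - round ((c : ℚ) / (n : ℚ)))| * |(n : ℚ)| := by
    rw [← abs_mul]
    congr 1
    field_simp
  rw [this, abs_of_pos hn']
  calc |((c : ℚ) / n - round ((c : ℚ) / (n : ℚ)))| * (n : ℚ) ≤ (1/2) * n := by
        apply mul_le_mul_of_nonneg_right h (le_of_lt hn')
    _ = (n : ℚ) / 2 := by ring

theorem nrm_mod_lt (x : Eis) {y : Eis} (hy : y ≠ 0) : nrm (x % y) < nrm y := by
  have hn : 0 < nrm y := nrm_pos hy
  set q : Eis := x / y with hq
  set r : Eis := x % y with hr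
  have hrc : r * conj y = x * conj y - q * ⟨nrm y, 0⟩ := by
    rw [hr, mod_def, sub_mul]
    congr 1
    rw [mul_comm y (x / y), mul_assoc, mul_conj, hq]
  set c : Eis := x * conj y with hc
  set n : ℤ := nrm y with hnn
  have hA : (r * conj y).a = c.a - q.a * n := by rw [hrc]; simp [hc, hnn]
  have hB : (r * conj y).b = c.b - q.b * n := by rw [hrc]; simp [hc, hnn]
  set A : ℤ := c.a - q.a * n with hAd
  set B : ℤ := c.b - q.b * n with hBd
  have habsA : |(A : ℚ)| ≤ (n : ℚ) / 2 := by
    have := round_bound c.a n hn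
    rw [hAd]
    push_cast
    congr 2
  have habsB : |(B : ℚ)| ≤ (n : ℚ) / 2 := by
    have := round_bound c.b n hn
    rw [hBd]
    push_cast
    congr 2
  have hnrmrc : nrm (r * conj y) = A ^ 2 - A * B + B ^ 2 := by
    rw [nrm, hA, hB]
  have hprod : nrm r * n = A ^ 2 - A * B + B ^ 2 := by
    rw [← hnrmrc, nrm_mul, nrm_conj]
  have hq1 : (A : ℚ) ^ 2 - A * B + B ^ 2 ≤ 3 / 4 * (n : ℚ) ^ 2 := by
    have h1 : -((A : ℚ) * B) ≤ |(A : ℚ)| * |(B : ℚ)| := by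
      rw [← abs_mul]; exact neg_le_abs _
    have h2 : |(A : ℚ)| * |(B : ℚ)| ≤ ((n : ℚ) / 2) * ((n : ℚ) / 2) :=
      mul_le_mul habsA habsB (abs_nonneg _) (le_trans (abs_nonneg _) habsA)
    nlinarith [sq_abs (A : ℚ), sq_abs (B : ℚ), abs_nonneg (A : ℚ), abs_nonneg (B : ℚ),
      sq_nonneg (|(A:ℚ)| - |(B:ℚ)|)]
  have hnq : (0 : ℚ) < (n : ℚ) := by exact_mod_cast hn
  have : (nrm r : ℚ) * n < n * n := by
    calc (nrm r : ℚ) * n = (A : ℚ) ^ 2 - A * B + B ^ 2 := by exact_mod_cast hprod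
      _ ≤ 3 / 4 * (n : ℚ) ^ 2 := hq1
      _ < n * n := by nlinarith
  have : (nrm r : ℚ) < n := by
    by_contra hcon
    push_neg at hcon
    nlinarith
  exact_mod_cast this

theorem nrm_le_nrm_mul_left (x : Eis) {y : Eis} (hy : y ≠ 0) :
    (nrm x).natAbs ≤ (nrm (x * y)).natAbs := by
  rw [nrm_mul, Int.natAbs_mul]
  exact Nat.le_mul_of_pos_right _ (Int.natAbs_pos.2 (fun h => hy (nrm_eq_zero.1 h)))

theorem natAbs_nrm_mod_lt (x : Eis) {y : Eis} (hy : y ≠ 0) :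
    (nrm (x % y)).natAbs < (nrm y).natAbs := by
  have := nrm_mod_lt x hy
  have h1 := nrm_nonneg (x % y)
  have h2 := nrm_nonneg y
  omega

instance : EuclideanDomain Eis :=
  { Eis.commRing with
    quotient := (· / ·)
    remainder := (· % ·)
    quotient_zero := fun x => by
      ext <;> simp [div_def, nrm]
    quotient_mul_add_remainder_eq := fun x y => by
      show y * (x / y) + (x - y * (x / y)) = x
      ring
    r := fun x y => (nrm x).natAbs < (nrm y).natAbs
    r_wellFounded := (measure fun x : Eis => (nrm x).natAbs).wf
    remainder_lt := fun x y hy => natAbs_nrm_mod_lt x hy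
    mul_left_not_lt := fun x y hy => not_lt_of_ge (nrm_le_nrm_mul_left x hy) }

end Eis

namespace Eis

theorem pow3_a (x : Eis) : (x ^ 3).a = x.a ^ 3 + x.b ^ 3 - 3 * x.a * x.b ^ 2 := by
  simp [pow_succ]; ring

theorem pow3_b (x : Eis) : (x ^ 3).b = 3 * x.a ^ 2 * x.b - 3 * x.a * x.b ^ 2 := by
  simp [pow_succ]; ring

theorem isUnit_cases {u : Eis} (h : IsUnit u) :
    u = ⟨1, 0⟩ ∨ u = ⟨-1, 0⟩ ∨ u = ⟨0, 1⟩ ∨ u = ⟨0, -1⟩ ∨ u = ⟨-1, -1⟩ ∨ u = ⟨1, 1⟩ := by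
  obtain ⟨v, hv⟩ := h.exists_right_inv
  have hn : nrm u * nrm v = 1 := by rw [← nrm_mul, hv]; simp [nrm]
  have hu1 : nrm u = 1 := Int.eq_one_of_mul_eq_one_right (nrm_nonneg u) hn
  obtain ⟨a, b⟩ := u
  have he : a ^ 2 - a * b + b ^ 2 = 1 := hu1
  have h4 : (2 * a - b) ^ 2 + 3 * b ^ 2 = 4 := by linear_combination 4 * he
  have hb : -1 ≤ b ∧ b ≤ 1 := by constructor <;> nlinarith [sq_nonneg (2 * a - b)]
  have ha : -1 ≤ a ∧ a ≤ 1 := by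
    constructor <;> nlinarith [sq_nonneg (2 * a - b), sq_nonneg b, sq_nonneg (2 * a - b + 3 * b),
      sq_nonneg (2 * a - b - 3 * b)]
  obtain ⟨hb1, hb2⟩ := hb
  obtain ⟨ha1, ha2⟩ := ha
  interval_cases a <;> interval_cases b <;> simp_all [Eis.mk.injEq]

theorem omega_pow3 : (⟨0, 1⟩ : Eis) ^ 3 = 1 := by
  ext <;> simp [pow_succ]

end Eis

/-- Cube injectivity over ℤ. -/
theorem int_cube_inj {a b : ℤ} (h : a ^ 3 = b ^ 3) : a = b := by
  have h3 : Odd 3 := ⟨1, by norm_num⟩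
  exact (h3.strictMono_pow (R := ℤ)).injective h

/-- Coprime factors of a cube are cubes (over ℤ). -/
theorem int_cube_split {a b c : ℤ} (hab : IsCoprime a b) (h : a * b = c ^ 3) :
    ∃ d : ℤ, a = d ^ 3 := by
  obtain ⟨d, u, hu⟩ := exists_associated_pow_of_mul_eq_pow' hab h
  rcases Int.isUnit_iff.1 u.isUnit with h1 | h1
  · exact ⟨d, by rw [← hu, h1, mul_one]⟩
  · exact ⟨-d, by rw [← hu, h1]; ring⟩

theorem not_isUnit_two : ¬ IsUnit (2 : ℤ) := by
  simp [Int.isUnit_iff]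

theorem not_isUnit_three : ¬ IsUnit (3 : ℤ) := by
  simp [Int.isUnit_iff]

/-- coprime integers are not both even -/
theorem not_both_even {p q : ℤ} (h : IsCoprime p q) : ¬ (2 ∣ p ∧ 2 ∣ q) := by
  rintro ⟨h1, h2⟩
  exact not_isUnit_two (h.isUnit_of_dvd' h1 h2)

/-! ### Euler's lemma: parametrization of coprime solutions of `p² + 3q² = s³` -/

theorem odd_aux {m n : ℤ} (h : ¬(2 ∣ m ∧ 2 ∣ n)) : Odd (m ^ 3 + n ^ 3 - 3 * m ^ 2 * n) := by
  rcases Int.even_or_odd m with ⟨k, hk⟩ | ⟨k, hk⟩ <;>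
    rcases Int.even_or_odd n with ⟨l, hl⟩ | ⟨l, hl⟩
  · exact absurd ⟨⟨k, by omega⟩, ⟨l, by omega⟩⟩ h
  · exact ⟨4 * k ^ 3 + 4 * l ^ 3 + 6 * l ^ 2 + 3 * l - 12 * k ^ 2 * l - 6 * k ^ 2, by
      subst hk hl; ring⟩
  · exact ⟨4 * k ^ 3 + 6 * k ^ 2 + 3 * k + 4 * l ^ 3 - 12 * k ^ 2 * l - 12 * k * l - 3 * l, by
      subst hk hl; ring⟩
  · exact ⟨4 * k ^ 3 + 6 * k ^ 2 + 3 * k + 4 * l ^ 3 + 6 * l ^ 2 + 3 * l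
      - 12 * k ^ 2 * l - 6 * k ^ 2 - 12 * k * l - 6 * k - 3 * l - 1, by subst hk hl; ring⟩

theorem euler_param {p q s : ℤ} (hco : IsCoprime p q) (h : p ^ 2 + 3 * q ^ 2 = s ^ 3) :
    ∃ C D : ℤ, p = C * (C ^ 2 - 9 * D ^ 2) ∧ q = 3 * D * (C ^ 2 - D ^ 2) := by
  have hne := not_both_even hco
  have hparity : Odd (p + q) ∧ Odd s := by
    rcases Int.even_or_odd p with ⟨k, hk⟩ | ⟨k, hk⟩ <;>
      rcases Int.even_or_odd q with ⟨l, hl⟩ | ⟨l, hl⟩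
    · exact absurd ⟨⟨k, by omega⟩, ⟨l, by omega⟩⟩ hne
    · have hodd3 : Odd (s ^ 3) := ⟨2 * k ^ 2 + 6 * l ^ 2 + 6 * l + 1, by
        rw [← h]; subst hk hl; ring⟩
      have hs : Odd s := by
        rcases Int.even_or_odd s with ⟨u, hu⟩ | hs
        · exact absurd hodd3 (Int.not_odd_iff_even.mpr ⟨4 * u ^ 3, by subst hu; ring⟩)
        · exact hs
      exact ⟨⟨k + l, by omega⟩, hs⟩
    · have hodd3 : Odd (s ^ 3) := ⟨2 * k ^ 2 + 2 * k + 6 * l ^ 2, by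
        rw [← h]; subst hk hl; ring⟩
      have hs : Odd s := by
        rcases Int.even_or_odd s with ⟨u, hu⟩ | hs
        · exact absurd hodd3 (Int.not_odd_iff_even.mpr ⟨4 * u ^ 3, by subst hu; ring⟩)
        · exact hs
      exact ⟨⟨k + l, by omega⟩, hs⟩
    · exfalso
      obtain ⟨α, hα⟩ : Even (k * (k + 1)) := Int.even_mul_succ_self k
      obtain ⟨β, hβ⟩ : Even (l * (l + 1)) := Int.even_mul_succ_self l
      have hval : s ^ 3 = 8 * (α + 3 * β) + 4 := by
        rw [← h]; subst hk hl; linear_combination 4 * hα + 12 * hβ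
      rcases Int.even_or_odd s with ⟨u, hu⟩ | ⟨u, hu⟩
      · rw [hu] at hval
        have h8 : 8 * u ^ 3 = 8 * (α + 3 * β) + 4 := by linear_combination hval
        have h9 : ∃ U : ℤ, 8 * U = 8 * (α + 3 * β) + 4 := ⟨u ^ 3, h8⟩
        obtain ⟨U, hU⟩ := h9
        omega
      · rw [hu] at hval
        obtain ⟨δ, hδ⟩ : Even (u * (u + 1)) := Int.even_mul_succ_self u
        have h13 : 8 * u ^ 3 + 24 * δ - 6 * u + 1 = 8 * (α + 3 * β) + 4 := by
          linear_combination hval - 12 * hδ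
        have h9 : ∃ U : ℤ, 8 * U + 24 * δ - 6 * u + 1 = 8 * (α + 3 * β) + 4 := ⟨u ^ 3, h13⟩
        obtain ⟨U, hU⟩ := h9
        omega
  obtain ⟨hpq_odd, hs_odd⟩ := hparity
  have h3s : ¬ (3 : ℤ) ∣ s := by
    rintro ⟨u, hu⟩
    have h3p : (3 : ℤ) ∣ p := by
      have : (3 : ℤ) ∣ p ^ 2 := ⟨9 * u ^ 3 - q ^ 2, by rw [hu] at h; linear_combination h⟩
      exact Int.prime_three.dvd_of_dvd_pow this
    obtain ⟨v, hv⟩ := h3p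
    have h3q : (3 : ℤ) ∣ q := by
      have h33 : (3 : ℤ) ∣ q ^ 2 := by
        refine ⟨3 * u ^ 3 - v ^ 2, ?_⟩
        have h34 : (3 : ℤ) * q ^ 2 = 3 * (3 * (3 * u ^ 3 - v ^ 2)) := by
          rw [hu, hv] at h; linear_combination h
        exact mul_left_cancel₀ (by norm_num : (3:ℤ) ≠ 0) h34
      exact Int.prime_three.dvd_of_dvd_pow h33
    exact not_isUnit_three (hco.isUnit_of_dvd' ⟨v, hv⟩ h3q)
  -- pass to Eisenstein integers
  have hcube : (⟨s, 0⟩ : Eis) ^ 3 = ⟨s ^ 3, 0⟩ := by ext <;> simp [pow_succ] <;> ring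
  have hmul : (⟨p + q, 2 * q⟩ : Eis) * ⟨p - q, -(2 * q)⟩ = (⟨s, 0⟩ : Eis) ^ 3 := by
    rw [hcube]; ext <;> simp <;> first | ring1 | linear_combination h | linear_combination -h
  have hcop : IsCoprime (⟨p + q, 2 * q⟩ : Eis) ⟨p - q, -(2 * q)⟩ := by
    rw [← EuclideanDomain.gcd_isUnit_iff]
    set w : Eis := ⟨p + q, 2 * q⟩ with hw
    set wb : Eis := ⟨p - q, -(2 * q)⟩ with hwb
    set g := EuclideanDomain.gcd w wb with hg
    have hgw : g ∣ w := EuclideanDomain.gcd_dvd_left w wb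
    have hgwb : g ∣ wb := EuclideanDomain.gcd_dvd_right w wb
    obtain ⟨α, β, hαβ⟩ := hco
    have h6 : g ∣ (⟨-6, 0⟩ : Eis) := by
      have hkey : g ∣ (⟨2, 0⟩ : Eis) * ⟨1, 2⟩ := by
        have heq : (w + wb) * (⟨α, 0⟩ * ⟨1, 2⟩) + (w - wb) * ⟨β, 0⟩
            = (⟨2, 0⟩ : Eis) * ⟨1, 2⟩ := by
          ext <;> simp [hw, hwb] <;> first | ring1 | linear_combination 2 * hαβ | linear_combination 4 * hαβ
        rw [← heq]
        exact dvd_add ((hgw.add hgwb).mul_right _) ((hgw.sub hgwb).mul_right _)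
      have heq2 : (⟨2, 0⟩ : Eis) * ⟨1, 2⟩ * ⟨1, 2⟩ = ⟨-6, 0⟩ := by ext <;> simp
      rw [← heq2]
      exact hkey.mul_right _
    have hds3 : g ∣ (⟨s ^ 3, 0⟩ : Eis) := by
      rw [← hcube, ← hmul]
      exact hgw.mul_right _
    have hcosz : IsCoprime (6 : ℤ) (s ^ 3) := by
      have h2 : IsCoprime (2 : ℤ) s := (Int.prime_two.coprime_iff_not_dvd).2
        (by rintro ⟨c, hc⟩; obtain ⟨j, hj⟩ := hs_odd; omega)
      have h3 : IsCoprime (3 : ℤ) s := (Int.prime_three.coprime_iff_not_dvd).2 h3s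
      have h6' := h3.mul_left h2
      rw [show (3 : ℤ) * 2 = 6 by norm_num] at h6'
      exact h6'.pow_right
    obtain ⟨c, d, hcd⟩ := hcosz
    have hone : (⟨-6, 0⟩ : Eis) * ⟨-c, 0⟩ + (⟨s ^ 3, 0⟩ : Eis) * ⟨d, 0⟩ = 1 := by
      ext <;> simp <;> first | ring1 | linear_combination hcd | linear_combination -hcd
    exact isUnit_of_dvd_one (hone ▸ dvd_add (h6.mul_right _) (hds3.mul_right _))
  obtain ⟨d0, u, hu⟩ := exists_associated_pow_of_mul_eq_pow' hcop hmul
  have hnegcube : ∀ x : Eis, (-x) ^ 3 = -(x ^ 3) := fun x => by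
    ext <;> simp [pow_succ] <;> ring
  have hu2 : (⟨-1, 0⟩ : Eis) = -1 := by ext <;> simp
  have hu4 : (⟨0, -1⟩ : Eis) = -(⟨0, 1⟩ : Eis) := by ext <;> simp
  have hu6 : (⟨1, 1⟩ : Eis) = -(⟨-1, -1⟩ : Eis) := by ext <;> simp
  have hthree : ∃ γ : Eis, (⟨p + q, 2 * q⟩ : Eis) = γ ^ 3
      ∨ (⟨p + q, 2 * q⟩ : Eis) = γ ^ 3 * ⟨0, 1⟩
      ∨ (⟨p + q, 2 * q⟩ : Eis) = γ ^ 3 * ⟨-1, -1⟩ := by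
    rcases Eis.isUnit_cases u.isUnit with h1 | h1 | h1 | h1 | h1 | h1 <;> rw [h1] at hu
    · refine ⟨d0, Or.inl ?_⟩
      rw [← hu]
      ext <;> simp
    · refine ⟨-d0, Or.inl ?_⟩
      rw [hnegcube]
      rw [hu2, mul_neg_one] at hu
      exact hu.symm
    · exact ⟨d0, Or.inr (Or.inl hu.symm)⟩
    · refine ⟨-d0, Or.inr (Or.inl ?_)⟩
      rw [hnegcube, neg_mul]
      rw [hu4, mul_neg] at hu
      exact hu.symm
    · exact ⟨d0, Or.inr (Or.inr hu.symm)⟩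
    · refine ⟨-d0, Or.inr (Or.inr ?_)⟩
      rw [hnegcube, neg_mul]
      rw [hu6, mul_neg] at hu
      exact hu.symm
  obtain ⟨γ, hγ⟩ := hthree
  have hgood : (⟨p + q, 2 * q⟩ : Eis) = γ ^ 3 := by
    rcases hγ with h1 | h1 | h1
    · exact h1
    · exfalso
      have ha' : p + q = -(3 * γ.a ^ 2 * γ.b - 3 * γ.a * γ.b ^ 2) := by
        have h2 := congrArg Eis.a h1
        simp [Eis.pow3_a, Eis.pow3_b] at h2
        linear_combination h2
      have hb' : 2 * q = γ.a ^ 3 + γ.b ^ 3 - 3 * γ.a ^ 2 * γ.b := by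
        have h2 := congrArg Eis.b h1
        simp [Eis.pow3_a, Eis.pow3_b] at h2
        linear_combination h2
      by_cases hmn : 2 ∣ γ.a ∧ 2 ∣ γ.b
      · obtain ⟨⟨k, hk⟩, ⟨l, hl⟩⟩ := hmn
        refine (Int.not_odd_iff_even.mpr ?_) hpq_odd
        exact ⟨-(12 * k ^ 2 * l) + 12 * k * l ^ 2, by rw [ha', hk, hl]; ring⟩
      · obtain ⟨j, hj⟩ := odd_aux hmn
        have h2q : 2 * q = 2 * j + 1 := by linear_combination hb' + hj
        omega
    · exfalso
      have ha' : p + q = (3 * γ.a ^ 2 * γ.b - 3 * γ.a * γ.b ^ 2)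
          - (γ.a ^ 3 + γ.b ^ 3 - 3 * γ.a * γ.b ^ 2) := by
        have h2 := congrArg Eis.a h1
        simp [Eis.pow3_a, Eis.pow3_b] at h2
        linear_combination h2
      have hb' : 2 * q = -(γ.a ^ 3 + γ.b ^ 3 - 3 * γ.a * γ.b ^ 2) := by
        have h2 := congrArg Eis.b h1
        simp [Eis.pow3_a, Eis.pow3_b] at h2
        linear_combination h2
      by_cases hmn : 2 ∣ γ.a ∧ 2 ∣ γ.b
      · obtain ⟨⟨k, hk⟩, ⟨l, hl⟩⟩ := hmn
        refine (Int.not_odd_iff_even.mpr ?_) hpq_odd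
        exact ⟨12 * k ^ 2 * l - 4 * k ^ 3 - 4 * l ^ 3, by rw [ha', hk, hl]; ring⟩
      · obtain ⟨j, hj⟩ := odd_aux (show ¬(2 ∣ γ.b ∧ 2 ∣ γ.a) by tauto)
        have h2q : 2 * q = -(2 * j + 1) := by linear_combination hb' - hj
        omega
  -- adjust γ so that its second coordinate is even
  obtain ⟨γ', hγ'3, D, hD⟩ : ∃ γ' : Eis, γ' ^ 3 = γ ^ 3 ∧ ∃ D, γ'.b = 2 * D := by
    by_cases h1 : 2 ∣ γ.b
    · obtain ⟨D, hD⟩ := h1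
      exact ⟨γ, rfl, D, hD⟩
    · by_cases h2 : 2 ∣ γ.a
      · refine ⟨γ * ⟨-1, -1⟩, ?_, ?_⟩
        · rw [mul_pow, show (⟨-1, -1⟩ : Eis) ^ 3 = 1 by ext <;> simp [pow_succ], mul_one]
        · obtain ⟨k, hk⟩ := h2
          exact ⟨-k, by simp [hk]⟩
      · refine ⟨γ * ⟨0, 1⟩, ?_, ?_⟩
        · rw [mul_pow, Eis.omega_pow3, mul_one]
        · have hd : 2 ∣ (γ.a - γ.b) := by omega
          obtain ⟨D, hD⟩ := hd
          refine ⟨D, ?_⟩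
          have hcomp : (γ * ⟨0, 1⟩ : Eis).b = γ.a - γ.b := by simp
          rw [hcomp, hD]
  rw [← hγ'3] at hgood
  have ha' : p + q = γ'.a ^ 3 + γ'.b ^ 3 - 3 * γ'.a * γ'.b ^ 2 := by
    have h2 := congrArg Eis.a hgood
    rw [Eis.pow3_a] at h2
    exact h2
  have hb' : 2 * q = 3 * γ'.a ^ 2 * γ'.b - 3 * γ'.a * γ'.b ^ 2 := by
    have h2 := congrArg Eis.b hgood
    rw [Eis.pow3_b] at h2
    exact h2
  rw [hD] at ha' hb'
  have hq : q = 3 * D * (γ'.a ^ 2 - 2 * γ'.a * D) := by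
    have h2 : (2 : ℤ) * q = 2 * (3 * D * (γ'.a ^ 2 - 2 * γ'.a * D)) := by
      linear_combination hb'
    exact mul_left_cancel₀ two_ne_zero h2
  refine ⟨γ'.a - D, D, ?_, ?_⟩
  · linear_combination ha' - hq
  · linear_combination hq

/-! ### Descent for `x³ + y³ = 2z³` -/

theorem natAbs_lt_of_cubes {a b : ℤ} (h : (a ^ 3).natAbs < (b ^ 3).natAbs) :
    a.natAbs < b.natAbs := by
  rw [Int.natAbs_pow, Int.natAbs_pow] at h
  by_contra hc
  push_neg at hc
  exact absurd (Nat.pow_le_pow_left hc 3) (by omega)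

theorem descent_step {z x y : ℤ} (hco : IsCoprime x y) (h : x ^ 3 + y ^ 3 = 2 * z ^ 3)
    (hxy : x ≠ y) (hxy' : x ≠ -y) :
    ∃ z' x' y' : ℤ, IsCoprime x' y' ∧ x' ^ 3 + y' ^ 3 = 2 * z' ^ 3 ∧ x' ≠ y' ∧ x' ≠ -y' ∧
      (z' ^ 3).natAbs < (z ^ 3).natAbs := by
  -- x and y are both odd
  have hodd : Odd x ∧ Odd y := by
    rcases Int.even_or_odd x with ⟨k, hk⟩ | hx
    · rcases Int.even_or_odd y with ⟨l, hl⟩ | ⟨l, hl⟩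
      · exact absurd (not_isUnit_two (hco.isUnit_of_dvd' ⟨k, by omega⟩ ⟨l, by omega⟩)) not_false
      · exfalso
        have he : Even (x ^ 3 + y ^ 3) := ⟨z ^ 3, by linarith⟩
        have ho : Odd (x ^ 3 + y ^ 3) := ⟨4 * k ^ 3 + 4 * l ^ 3 + 6 * l ^ 2 + 3 * l, by
          rw [hk, hl]; ring⟩
        exact (Int.not_odd_iff_even.mpr he) ho
    · rcases Int.even_or_odd y with ⟨l, hl⟩ | hy
      · exfalso
        obtain ⟨k, hk⟩ := hx
        have he : Even (x ^ 3 + y ^ 3) := ⟨z ^ 3, by linarith⟩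
        have ho : Odd (x ^ 3 + y ^ 3) := ⟨4 * k ^ 3 + 6 * k ^ 2 + 3 * k + 4 * l ^ 3, by
          rw [hk, hl]; ring⟩
        exact (Int.not_odd_iff_even.mpr he) ho
      · exact ⟨hx, hy⟩
  obtain ⟨⟨k, hk⟩, ⟨l, hl⟩⟩ := hodd
  set p : ℤ := k + l + 1 with hp
  set q : ℤ := k - l with hqdef
  have hx : x = p + q := by omega
  have hy : y = p - q := by omega
  have hq0 : q ≠ 0 := fun h0 => hxy (by omega)
  have hp0 : p ≠ 0 := fun h0 => hxy' (by omega)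
  have hcopq : IsCoprime p q := by
    obtain ⟨α, β, hαβ⟩ := hco
    exact ⟨α + β, α - β, by rw [hx, hy] at hαβ; linear_combination hαβ⟩
  have hnbe := not_both_even hcopq
  have hz3 : z ^ 3 = p * (p ^ 2 + 3 * q ^ 2) := by
    have h2 : 2 * z ^ 3 = 2 * (p * (p ^ 2 + 3 * q ^ 2)) := by
      rw [hx, hy] at h; linear_combination -h
    exact mul_left_cancel₀ two_ne_zero h2
  have hq2pos : (1 : ℤ) ≤ q ^ 2 := by
    have h1 : q ^ 2 ≠ 0 := pow_ne_zero _ hq0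
    have h2 : 0 ≤ q ^ 2 := sq_nonneg q
    omega
  by_cases h3 : (3 : ℤ) ∣ p
  · -- case 3 ∣ p
    obtain ⟨t, ht⟩ := h3
    have ht0 : t ≠ 0 := fun h0 => hp0 (by omega)
    have hz9 : z ^ 3 = 9 * t * (3 * t ^ 2 + q ^ 2) := by rw [hz3, ht]; ring
    have hcoqt : IsCoprime q t :=
      (hcopq.of_isCoprime_of_dvd_left ⟨3, by omega⟩).symm
    have h3q : ¬ (3 : ℤ) ∣ q := fun hdvd =>
      not_isUnit_three (hcopq.isUnit_of_dvd' ⟨t, ht⟩ hdvd)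
    have hco9 : IsCoprime (9 * t) (3 * t ^ 2 + q ^ 2) := by
      have hco3 : IsCoprime (3 : ℤ) (3 * t ^ 2 + q ^ 2) := by
        refine (Int.prime_three.coprime_iff_not_dvd).2 ?_
        rintro ⟨c, hc⟩
        exact h3q (Int.prime_three.dvd_of_dvd_pow (⟨c - t ^ 2, by linarith⟩ : (3:ℤ) ∣ q ^ 2))
      have hco9' : IsCoprime (9 : ℤ) (3 * t ^ 2 + q ^ 2) := by
        have h9 : IsCoprime ((3 : ℤ) ^ 2) (3 * t ^ 2 + q ^ 2) := hco3.pow_left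
        rwa [show (3 : ℤ) ^ 2 = 9 by norm_num] at h9
      have hcot : IsCoprime t (3 * t ^ 2 + q ^ 2) := by
        have h1 : IsCoprime t (q ^ 2) := hcoqt.symm.pow_right
        have h2 := h1.add_mul_left_right (3 * t)
        rwa [show q ^ 2 + t * (3 * t) = 3 * t ^ 2 + q ^ 2 by ring] at h2
      exact hco9'.mul_left hcot
    obtain ⟨w, hw⟩ : ∃ w, 9 * t = w ^ 3 := int_cube_split hco9 hz9.symm
    obtain ⟨s, hs⟩ : ∃ s, 3 * t ^ 2 + q ^ 2 = s ^ 3 := by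
      refine int_cube_split hco9.symm (c := z) ?_
      rw [hz9]; ring
    obtain ⟨C, D, hC, hD⟩ := euler_param hcoqt (show q ^ 2 + 3 * t ^ 2 = s ^ 3 by linear_combination hs)
    have hD0 : D ≠ 0 := fun h0 => ht0 (by rw [hD, h0]; ring)
    have hC0 : C ≠ 0 := fun h0 => hq0 (by rw [hC, h0]; ring)
    have hCD : IsCoprime C D :=
      (hcoqt.of_isCoprime_of_dvd_left
        ⟨C ^ 2 - 9 * D ^ 2, hC⟩).of_isCoprime_of_dvd_right
        ⟨3 * (C ^ 2 - D ^ 2), by rw [hD]; ring⟩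
    have hnbeCD := not_both_even hCD
    -- parity: C and D not both odd
    have hCDodd : ¬(¬(2 ∣ C) ∧ ¬(2 ∣ D)) := by
      rintro ⟨h2C, h2D⟩
      obtain ⟨c', hc'⟩ := Int.not_even_iff_odd.1 (fun he => h2C he.two_dvd)
      obtain ⟨d', hd'⟩ := Int.not_even_iff_odd.1 (fun he => h2D he.two_dvd)
      refine hnbe ⟨⟨18 * ((2 * d' + 1) * (c' ^ 2 + c' - d' ^ 2 - d')), ?_⟩,
        ⟨(2 * c' + 1) * (2 * (c' ^ 2 + c' - 9 * d' ^ 2 - 9 * d' - 2)), ?_⟩⟩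
      · rw [ht, hD, hc', hd']; ring
      · rw [hC, hc', hd']; ring
    -- extract v with v³ = D (C-D) (C+D)
    have h27 : w ^ 3 = 27 * (D * ((C - D) * (C + D))) := by rw [← hw, hD]; ring
    have h3w : (3 : ℤ) ∣ w :=
      Int.prime_three.dvd_of_dvd_pow (n := 3) ⟨D * ((C - D) * (C + D)) * 9, by rw [h27]; ring⟩
    obtain ⟨v, hv⟩ := h3w
    have hv3 : v ^ 3 = D * ((C - D) * (C + D)) := by
      have h27' : 27 * v ^ 3 = 27 * (D * ((C - D) * (C + D))) := by
        rw [← h27, hv]; ring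
      exact mul_left_cancel₀ (by norm_num) h27'
    -- coprimality of the three factors
    have hcoD_CmD : IsCoprime D (C - D) := by
      have h1 := hCD.symm.add_mul_left_right (-1)
      rwa [show C + D * -1 = C - D by ring] at h1
    have hcoD_CpD : IsCoprime D (C + D) := by
      have h1 := hCD.symm.add_mul_left_right 1
      rwa [show C + D * 1 = C + D by ring] at h1
    have h2CD : 2 ∣ C ∨ 2 ∣ D := by tauto
    have hCmD2 : ¬ (2 : ℤ) ∣ (C - D) := by omega
    have hco_mp : IsCoprime (C - D) (C + D) := by
      have hd2 : IsCoprime (C - D) (2 : ℤ) := ((Int.prime_two.coprime_iff_not_dvd).2 hCmD2).symm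
      have h2D : IsCoprime (C - D) (2 * D) := hd2.mul_right hcoD_CmD.symm
      have h1 := h2D.add_mul_left_right 1
      rwa [show 2 * D + (C - D) * 1 = C + D by ring] at h1
    -- the three factors are cubes
    obtain ⟨e, he⟩ : ∃ e, D = e ^ 3 :=
      int_cube_split (hcoD_CmD.mul_right hcoD_CpD) hv3.symm
    obtain ⟨f, hf⟩ : ∃ f, C - D = f ^ 3 :=
      int_cube_split (hcoD_CmD.symm.mul_right hco_mp)
        (show (C - D) * (D * (C + D)) = v ^ 3 by linear_combination -hv3)
    obtain ⟨g, hg⟩ : ∃ g, C + D = g ^ 3 :=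
      int_cube_split (hcoD_CpD.symm.mul_right hco_mp.symm)
        (show (C + D) * (D * (C - D)) = v ^ 3 by linear_combination -hv3)
    refine ⟨e, g, -f, ?_, ?_, ?_, ?_, ?_⟩
    · -- coprime
      have h1 : IsCoprime (g ^ 3) (f ^ 3) := by rw [← hf, ← hg]; exact hco_mp.symm
      exact (((IsCoprime.pow_left_iff three_pos).1
        ((IsCoprime.pow_right_iff three_pos).1 h1))).neg_right
    · linear_combination -hg + hf + 2 * he
    · intro h0
      apply hC0
      have h1 : C + D = -(C - D) := by
        rw [hg, h0, show ((-f : ℤ)) ^ 3 = -(f ^ 3) by ring, ← hf]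
      omega
    · intro h0
      apply hD0
      have h1 : C + D = C - D := by
        rw [hg, h0, show (-(-f : ℤ)) ^ 3 = f ^ 3 by ring, ← hf]
      omega
    · -- measure decreases
      have hCD2 : C ^ 2 - D ^ 2 ≠ 0 := fun h0 => ht0 (by rw [hD, h0]; ring)
      have hzn : (z ^ 3).natAbs = 9 * t.natAbs * (3 * t ^ 2 + q ^ 2).natAbs := by
        rw [hz9, Int.natAbs_mul, Int.natAbs_mul]
        norm_num
      have htn : t.natAbs = 3 * D.natAbs * (C ^ 2 - D ^ 2).natAbs := by
        rw [hD, Int.natAbs_mul, Int.natAbs_mul]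
        norm_num
      have hA : 1 ≤ (3 * t ^ 2 + q ^ 2).natAbs := by
        have : (0 : ℤ) < 3 * t ^ 2 + q ^ 2 := by positivity
        omega
      have hB : 1 ≤ (C ^ 2 - D ^ 2).natAbs := by
        have := hCD2
        omega
      have hDn : 1 ≤ D.natAbs := by
        have := hD0
        omega
      have hen : (e ^ 3).natAbs = D.natAbs := by rw [← he]
      have hBA : 0 < (C ^ 2 - D ^ 2).natAbs * (3 * t ^ 2 + q ^ 2).natAbs :=
        Nat.mul_pos (by omega) (by omega)
      have hform : 9 * (3 * D.natAbs * (C ^ 2 - D ^ 2).natAbs) * (3 * t ^ 2 + q ^ 2).natAbs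
          = 27 * D.natAbs * ((C ^ 2 - D ^ 2).natAbs * (3 * t ^ 2 + q ^ 2).natAbs) := by ring
      rw [hen, hzn, htn, hform]
      exact lt_of_lt_of_le (show D.natAbs < 27 * D.natAbs by omega)
        (Nat.le_mul_of_pos_right _ hBA)
  · -- case 3 ∤ p
    have hco1 : IsCoprime p (p ^ 2 + 3 * q ^ 2) := by
      have hco3 : IsCoprime p (3 : ℤ) := ((Int.prime_three.coprime_iff_not_dvd).2 h3).symm
      have h1 : IsCoprime p (3 * q ^ 2) := hco3.mul_right hcopq.pow_right
      have h2 := h1.add_mul_left_right p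
      rwa [show 3 * q ^ 2 + p * p = p ^ 2 + 3 * q ^ 2 by ring] at h2
    obtain ⟨r, hr⟩ : ∃ r, p = r ^ 3 := int_cube_split hco1 hz3.symm
    obtain ⟨s, hs⟩ : ∃ s, p ^ 2 + 3 * q ^ 2 = s ^ 3 := by
      refine int_cube_split hco1.symm (c := z) ?_
      rw [hz3]; ring
    obtain ⟨C, D, hC, hD⟩ := euler_param hcopq hs
    have hD0 : D ≠ 0 := fun h0 => hq0 (by rw [hD, h0]; ring)
    have hC0 : C ≠ 0 := fun h0 => hp0 (by rw [hC, h0]; ring)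
    have h3C : ¬ (3 : ℤ) ∣ C := fun ⟨c, hc⟩ => h3 ⟨c * (C ^ 2 - 9 * D ^ 2), by rw [hC, hc]; ring⟩
    have hCD : IsCoprime C D :=
      (hcopq.of_isCoprime_of_dvd_left
        ⟨C ^ 2 - 9 * D ^ 2, hC⟩).of_isCoprime_of_dvd_right
        ⟨3 * (C ^ 2 - D ^ 2), by rw [hD]; ring⟩
    have hnbeCD := not_both_even hCD
    have hCDodd : ¬(¬(2 ∣ C) ∧ ¬(2 ∣ D)) := by
      rintro ⟨h2C, h2D⟩
      obtain ⟨c', hc'⟩ := Int.not_even_iff_odd.1 (fun he => h2C he.two_dvd)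
      obtain ⟨d', hd'⟩ := Int.not_even_iff_odd.1 (fun he => h2D he.two_dvd)
      refine hnbe ⟨⟨(2 * c' + 1) * (2 * (c' ^ 2 + c' - 9 * d' ^ 2 - 9 * d' - 2)), ?_⟩,
        ⟨3 * ((2 * d' + 1) * (2 * (c' ^ 2 + c' - d' ^ 2 - d'))), ?_⟩⟩
      · rw [hC, hc', hd']; ring
      · rw [hD, hc', hd']; ring
    have hr3 : r ^ 3 = C * ((C - 3 * D) * (C + 3 * D)) := by rw [← hr, hC]; ring
    -- coprimality of the three factors
    have hcoC3D : IsCoprime C (3 * D) :=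
      (((Int.prime_three.coprime_iff_not_dvd).2 h3C).symm).mul_right hCD
    have hcoC_m : IsCoprime C (C - 3 * D) := by
      have h1 := hcoC3D.neg_right.add_mul_left_right 1
      rwa [show -(3 * D) + C * 1 = C - 3 * D by ring] at h1
    have hcoC_p : IsCoprime C (C + 3 * D) := by
      have h1 := hcoC3D.add_mul_left_right 1
      rwa [show 3 * D + C * 1 = C + 3 * D by ring] at h1
    have h2CD : 2 ∣ C ∨ 2 ∣ D := by tauto
    have hCm3D2 : ¬ (2 : ℤ) ∣ (C - 3 * D) := by omega
    have h3Cm3D : ¬ (3 : ℤ) ∣ (C - 3 * D) := by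
      intro hdvd
      exact h3C (by omega)
    have hco_mp : IsCoprime (C - 3 * D) (C + 3 * D) := by
      have hd2 : IsCoprime (C - 3 * D) (2 : ℤ) :=
        ((Int.prime_two.coprime_iff_not_dvd).2 hCm3D2).symm
      have hd3 : IsCoprime (C - 3 * D) (3 : ℤ) :=
        ((Int.prime_three.coprime_iff_not_dvd).2 h3Cm3D).symm
      have hdD : IsCoprime (C - 3 * D) D := by
        have h1 := hCD.add_mul_left_left (-3)
        rwa [show C + D * (-3) = C - 3 * D by ring] at h1
      have h6D : IsCoprime (C - 3 * D) (2 * (3 * D)) := hd2.mul_right (hd3.mul_right hdD)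
      have h1 := h6D.add_mul_left_right 1
      rwa [show 2 * (3 * D) + (C - 3 * D) * 1 = C + 3 * D by ring] at h1
    obtain ⟨e, he⟩ : ∃ e, C = e ^ 3 :=
      int_cube_split (hcoC_m.mul_right hcoC_p) hr3.symm
    obtain ⟨f, hf⟩ : ∃ f, C - 3 * D = f ^ 3 :=
      int_cube_split (hcoC_m.symm.mul_right hco_mp)
        (show (C - 3 * D) * (C * (C + 3 * D)) = r ^ 3 by linear_combination -hr3)
    obtain ⟨g, hg⟩ : ∃ g, C + 3 * D = g ^ 3 :=
      int_cube_split (hcoC_p.symm.mul_right hco_mp.symm)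
        (show (C + 3 * D) * (C * (C - 3 * D)) = r ^ 3 by linear_combination -hr3)
    refine ⟨e, f, g, ?_, ?_, ?_, ?_, ?_⟩
    · have h1 : IsCoprime (f ^ 3) (g ^ 3) := by rw [← hf, ← hg]; exact hco_mp
      exact ((IsCoprime.pow_left_iff three_pos).1
        ((IsCoprime.pow_right_iff three_pos).1 h1))
    · linear_combination -hf - hg + 2 * he
    · intro h0
      apply hD0
      have h1 : C - 3 * D = C + 3 * D := by rw [hf, h0, hg]
      omega
    · intro h0
      apply hC0
      have h1 : C - 3 * D = -(C + 3 * D) := by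
        rw [hf, h0, show ((-g : ℤ)) ^ 3 = -(g ^ 3) by ring, ← hg]
      omega
    · have hC9D : C ^ 2 - 9 * D ^ 2 ≠ 0 := fun h0 => hp0 (by rw [hC, h0]; ring)
      have hzn : (z ^ 3).natAbs = p.natAbs * (p ^ 2 + 3 * q ^ 2).natAbs := by
        rw [hz3, Int.natAbs_mul]
      have hpn : p.natAbs = C.natAbs * (C ^ 2 - 9 * D ^ 2).natAbs := by
        rw [hC, Int.natAbs_mul]
      have hA : 2 ≤ (p ^ 2 + 3 * q ^ 2).natAbs := by
        have h0 : p ^ 2 ≠ 0 := pow_ne_zero _ hp0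
        have h0' : 0 ≤ p ^ 2 := sq_nonneg p
        have h1 : (1 : ℤ) ≤ p ^ 2 := by omega
        have h2 : (4 : ℤ) ≤ p ^ 2 + 3 * q ^ 2 := by linarith [hq2pos, h1]
        omega
      have hB : 1 ≤ (C ^ 2 - 9 * D ^ 2).natAbs := by
        have := hC9D
        omega
      have hCn : 1 ≤ C.natAbs := by
        have := hC0
        omega
      have hen : (e ^ 3).natAbs = C.natAbs := by rw [← he]
      have hBA : 2 ≤ (C ^ 2 - 9 * D ^ 2).natAbs * (p ^ 2 + 3 * q ^ 2).natAbs := by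
        calc 2 = 1 * 2 := rfl
          _ ≤ _ := Nat.mul_le_mul hB hA
      have hform : C.natAbs * (C ^ 2 - 9 * D ^ 2).natAbs * (p ^ 2 + 3 * q ^ 2).natAbs
          = C.natAbs * ((C ^ 2 - 9 * D ^ 2).natAbs * (p ^ 2 + 3 * q ^ 2).natAbs) := by ring
      rw [hen, hzn, hpn, hform]
      exact lt_of_lt_of_le (show C.natAbs < C.natAbs * 2 by omega)
        (Nat.mul_le_mul_left _ hBA)

theorem no_descent : ∀ N : ℕ, ∀ z x y : ℤ, (z ^ 3).natAbs ≤ N → IsCoprime x y →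
    x ^ 3 + y ^ 3 = 2 * z ^ 3 → x = y ∨ x = -y := by
  intro N
  induction N with
  | zero =>
    intro z x y hz hco h
    have hz0 : z = 0 := by
      have h1 : z ^ 3 = 0 := by omega
      exact pow_eq_zero_iff (by norm_num) |>.1 h1
    right
    refine int_cube_inj ?_
    rw [hz0] at h
    linear_combination h
  | succ n ih =>
    intro z x y hz hco h
    by_cases hxy : x = y
    · exact Or.inl hxy
    by_cases hxy' : x = -y
    · exact Or.inr hxy'
    obtain ⟨z', x', y', hco', h', hne1, hne2, hlt⟩ := descent_step hco h hxy hxy'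
    rcases ih z' x' y' (by omega) hco' h' with h1 | h1
    · exact (hne1 h1).elim
    · exact (hne2 h1).elim

theorem euler_two_cubes {x y z : ℤ} (hco : IsCoprime x y) (h : x ^ 3 + y ^ 3 = 2 * z ^ 3) :
    x = y ∨ x = -y :=
  no_descent (z ^ 3).natAbs z x y le_rfl hco h

/-- The unique solution in positive integers of the Diophantine equation
`2 * x ^ 3 - y ^ 3 = 1` is `(x, y) = (1, 1)`. -/
theorem unique_solution_two_cubes (x y : ℤ) (hx : 0 < x) (hy : 0 < y)
    (h : 2 * x ^ 3 - y ^ 3 = 1) : x = 1 ∧ y = 1 := by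
  have h1 : (1 : ℤ) ^ 3 + y ^ 3 = 2 * x ^ 3 := by linear_combination -h
  rcases euler_two_cubes isCoprime_one_left h1 with h2 | h2
  · have hy1 : y = 1 := h2.symm
    have hx3 : x ^ 3 = 1 ^ 3 := by rw [hy1] at h; linarith
    exact ⟨int_cube_inj hx3, hy1⟩
  · exfalso
    omega
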